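/- Let T be a compact operator on a Hilbert space H, (ξ_k) a complete orthonormal system of (ker T)^⊥ (or of a closed subspace containing the support of T), and 0 < p ≤ 2. Then ∑_k μ_k(T)^p ≤ ∑_k ‖T ξ_k‖^p. -/

import Mathlib

set_option linter.unusedSectionVars false

open ContinuousLinearMap

variable {H : Type*} [NormedAddCommGroup H] [InnerProductSpace ℂ H] [CompleteSpace H]

local notation "⟪" x ", " y "⟫" => @inner ℂ _ _ x y

/-- The `k`-th singular value (approximation number) of a bounded operator `T`. -/
noncomputable def singularValue (T : H →L[ℂ] H) (k : ℕ) : ℝ :=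
  sInf ((fun F : H →L[ℂ] H => ‖T - F‖) ''
    {F | Module.rank ℂ (LinearMap.range (F : H →ₗ[ℂ] H)) ≤ (k : Cardinal)})

namespace SVAux

noncomputable def rk1 (v : H) : H →L[ℂ] H := (innerSL ℂ v).smulRight v

lemma rk1_apply (v x : H) : rk1 v x = ⟪v, x⟫ • v := rfl

noncomputable def projF (v : ℕ → H) (n : ℕ) : H →L[ℂ] H := ∑ i ∈ Finset.range n, rk1 (v i)

lemma projF_apply (v : ℕ → H) (n : ℕ) (x : H) :
    projF v n x = ∑ i ∈ Finset.range n, ⟪v i, x⟫ • v i := by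
  simp [projF, rk1, ContinuousLinearMap.sum_apply]

lemma projF_congr {v w : ℕ → H} (n : ℕ) (h : ∀ i < n, v i = w i) : projF v n = projF w n := by
  unfold projF
  exact Finset.sum_congr rfl fun i hi => by rw [h i (Finset.mem_range.mp hi)]

noncomputable def resOp (A : H →L[ℂ] H) (v : ℕ → H) (n : ℕ) : H →L[ℂ] H :=
  (1 - projF v n) ∘L A ∘L (1 - projF v n)

lemma resOp_congr (A : H →L[ℂ] H) {v w : ℕ → H} (n : ℕ) (h : ∀ i < n, v i = w i) :
    resOp A v n = resOp A w n := by
  unfold resOp; rw [projF_congr n h]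

/-- `Good v n`: the first `n` vectors are pairwise orthogonal with norm 1 or 0. -/
def Good (v : ℕ → H) (n : ℕ) : Prop :=
  (∀ i < n, ‖v i‖ = 1 ∨ v i = 0) ∧ ∀ i < n, ∀ j < n, i ≠ j → ⟪v i, v j⟫ = 0

lemma inner_self_projF {v : ℕ → H} {n : ℕ} (hG : Good v n) (x : H) :
    ⟪x, projF v n x⟫ = ⟪projF v n x, projF v n x⟫ := by
  rw [projF_apply, inner_sum, inner_sum]
  refine Finset.sum_congr rfl fun i hi => ?_
  rw [inner_smul_right, inner_smul_right, sum_inner]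
  rw [Finset.sum_eq_single i]
  · rw [inner_smul_left]
    rcases hG.1 i (Finset.mem_range.mp hi) with h1 | h0
    · rw [inner_self_eq_norm_sq_to_K, h1, ← inner_conj_symm x (v i)]
      push_cast
      ring
    · simp [h0]
  · intro j hj hji
    rw [inner_smul_left, hG.2 j (Finset.mem_range.mp hj) i (Finset.mem_range.mp hi) hji]
    simp
  · exact fun h => (h hi).elim


lemma norm_one_sub_projF_le {v : ℕ → H} {n : ℕ} (hG : Good v n) (x : H) :
    ‖(1 - projF v n) x‖ ≤ ‖x‖ := by
  have key := inner_self_projF hG x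
  have h1 : ((1 - projF v n) x) = x - projF v n x := by simp [ContinuousLinearMap.sub_apply]
  rw [h1]
  have hexp : ‖x - projF v n x‖ ^ 2 = ‖x‖ ^ 2 - ‖projF v n x‖ ^ 2 := by
    rw [@norm_sub_sq ℂ]
    have : RCLike.re (⟪x, projF v n x⟫) = ‖projF v n x‖ ^ 2 := by
      rw [key, inner_self_eq_norm_sq]
    rw [this]; ring
  have h2 : ‖x - projF v n x‖ ^ 2 ≤ ‖x‖ ^ 2 := by
    rw [hexp]; nlinarith [sq_nonneg ‖projF v n x‖]
  nlinarith [norm_nonneg (x - projF v n x), norm_nonneg x]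

lemma inner_one_sub_projF {v : ℕ → H} {n : ℕ} (hG : Good v n) {i : ℕ} (hi : i < n) (x : H) :
    ⟪v i, (1 - projF v n) x⟫ = 0 := by
  rcases hG.1 i hi with h1 | h0
  · have : ⟪v i, projF v n x⟫ = ⟪v i, x⟫ := by
      rw [projF_apply, inner_sum, Finset.sum_eq_single i]
      · rw [inner_smul_right, inner_self_eq_norm_sq_to_K, h1]; push_cast; ring
      · intro j hj hji
        rw [inner_smul_right, hG.2 i hi j (Finset.mem_range.mp hj) (Ne.symm hji)]; ring
      · exact fun h => (h (Finset.mem_range.mpr hi)).elim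
    simp [ContinuousLinearMap.sub_apply, inner_sub_right, this]
  · simp [h0]

lemma re_inner_le_norm (B : H →L[ℂ] H) (z : H) : (⟪B z, z⟫).re ≤ ‖B‖ * ‖z‖ ^ 2 := by
  calc (⟪B z, z⟫).re ≤ ‖⟪B z, z⟫‖ := Complex.re_le_norm _
    _ ≤ ‖B z‖ * ‖z‖ := norm_inner_le_norm _ _
    _ ≤ (‖B‖ * ‖z‖) * ‖z‖ := by
        have := B.le_opNorm z
        nlinarith [norm_nonneg z]
    _ = ‖B‖ * ‖z‖ ^ 2 := by ring

lemma opNorm_le_of_quadratic (B : H →L[ℂ] H)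
    (hsa : ∀ x y : H, ⟪B x, y⟫ = ⟪x, B y⟫)
    (hpos : ∀ x : H, 0 ≤ (⟪B x, x⟫).re) {M : ℝ} (hM : 0 ≤ M)
    (h : ∀ z : H, (⟪B z, z⟫).re ≤ M * ‖z‖ ^ 2) : ‖B‖ ≤ M := by
  refine ContinuousLinearMap.opNorm_le_bound B hM (fun x => ?_)
  rcases eq_or_ne (B x) 0 with h0 | h0
  · simp [h0]; positivity
  have hBx : (0:ℝ) < ‖B x‖ := norm_pos_iff.mpr h0
  set y : H := ((‖x‖ / ‖B x‖ : ℝ) : ℂ) • B x with hy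
  have hyn : ‖y‖ = ‖x‖ := by
    rw [hy, norm_smul]
    simp [abs_div, abs_of_nonneg (norm_nonneg x), abs_of_pos hBx]
    field_simp
  have hkey : ‖x‖ * ‖B x‖ = (⟪B x, y⟫).re := by
    rw [hy, inner_smul_right]
    have : ⟪B x, B x⟫ = ((‖B x‖ :ℝ) : ℂ) ^ 2 := inner_self_eq_norm_sq_to_K (B x)
    rw [this]
    push_cast
    rw [← Complex.ofReal_pow, ← Complex.ofReal_div, ← Complex.ofReal_mul, Complex.ofReal_re]
    field_simp
  have hpolar : 4 * (⟪B x, y⟫).re = (⟪B (x + y), x + y⟫).re - (⟪B (x - y), x - y⟫).re := by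
    have h1 : ⟪B (x+y), x+y⟫ = ⟪B x, x⟫ + ⟪B x, y⟫ + ⟪B y, x⟫ + ⟪B y, y⟫ := by
      rw [map_add]; rw [inner_add_left, inner_add_right, inner_add_right]; ring
    have h2 : ⟪B (x-y), x-y⟫ = ⟪B x, x⟫ - ⟪B x, y⟫ - ⟪B y, x⟫ + ⟪B y, y⟫ := by
      rw [map_sub]; rw [inner_sub_left, inner_sub_right, inner_sub_right]; ring
    have h3 : (⟪B y, x⟫).re = (⟪B x, y⟫).re := by
      rw [hsa y x, ← inner_conj_symm]
      exact Complex.conj_re _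
    rw [h1, h2]
    simp only [Complex.add_re, Complex.sub_re]
    rw [h3]; ring
  have hub : (⟪B (x + y), x + y⟫).re ≤ M * (2 * ‖x‖) ^ 2 := by
    refine le_trans (h _) ?_
    have : ‖x + y‖ ≤ 2 * ‖x‖ := by
      calc ‖x + y‖ ≤ ‖x‖ + ‖y‖ := norm_add_le _ _
        _ = 2 * ‖x‖ := by rw [hyn]; ring
    exact mul_le_mul_of_nonneg_left (by nlinarith [norm_nonneg (x + y)]) hM
  have hlb : 0 ≤ (⟪B (x - y), x - y⟫).re := hpos _
  have : 4 * (‖x‖ * ‖B x‖) ≤ 4 * (M * ‖x‖ ^ 2) := by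
    rw [hkey, hpolar] at *
    nlinarith
  rcases eq_or_lt_of_le (norm_nonneg x) with hx0 | hx0
  · exfalso; apply h0
    rw [show x = 0 from norm_eq_zero.mp hx0.symm]; simp
  · nlinarith

lemma exists_max_seq (B : H →L[ℂ] H)
    (hsa : ∀ x y : H, ⟪B x, y⟫ = ⟪x, B y⟫)
    (hpos : ∀ x : H, 0 ≤ (⟪B x, x⟫).re) (hn : ‖B‖ ≠ 0) :
    ∀ ε : ℝ, 0 < ε → ∃ x : H, ‖x‖ = 1 ∧ ‖B‖ - ε < (⟪B x, x⟫).re := by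
  intro ε hε
  by_contra hcon
  push_neg at hcon
  -- there exists a unit vector
  have hBne : B ≠ 0 := fun h => hn (by simp [h])
  obtain ⟨x₀, hx₀⟩ : ∃ x₀ : H, B x₀ ≠ 0 := by
    by_contra hall; push_neg at hall
    exact hBne (ContinuousLinearMap.ext fun x => by simp [hall x])
  have hx₀ne : x₀ ≠ 0 := fun h => hx₀ (by simp [h])
  have hx₀pos : (0:ℝ) < ‖x₀‖ := norm_pos_iff.mpr hx₀ne
  set u : H := ((‖x₀‖⁻¹ : ℝ) : ℂ) • x₀ with hu
  have hun : ‖u‖ = 1 := by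
    rw [hu, norm_smul]; simp [abs_of_pos (inv_pos.mpr hx₀pos)]
    field_simp
  rcases le_or_gt 0 (‖B‖ - ε) with hM | hM
  · -- quadratic form bounded by ‖B‖ - ε
    have hq : ∀ z : H, (⟪B z, z⟫).re ≤ (‖B‖ - ε) * ‖z‖ ^ 2 := by
      intro z
      rcases eq_or_ne z 0 with rfl | hz
      · simp
      have hzpos : (0:ℝ) < ‖z‖ := norm_pos_iff.mpr hz
      set w : H := ((‖z‖⁻¹ : ℝ) : ℂ) • z with hw
      have hwn : ‖w‖ = 1 := by
        rw [hw, norm_smul]; simp [abs_of_pos (inv_pos.mpr hzpos)]; field_simp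
      have := hcon w hwn
      have hzw : (⟪B z, z⟫).re = ‖z‖ ^ 2 * (⟪B w, w⟫).re := by
        rw [hw, map_smul, inner_smul_left, inner_smul_right, Complex.conj_ofReal]
        rw [← mul_assoc, ← Complex.ofReal_mul, Complex.re_ofReal_mul]
        field_simp
      rw [hzw]
      nlinarith [sq_nonneg ‖z‖, this]
    have := opNorm_le_of_quadratic B hsa hpos hM hq
    linarith
  · have h1 := hpos u
    have h2 := hcon u hun
    linarith

lemma exists_eigenvector (B : H →L[ℂ] H) (hB : IsCompactOperator (B : H → H))
    (hsa : ∀ x y : H, ⟪B x, y⟫ = ⟪x, B y⟫)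
    (hpos : ∀ x : H, 0 ≤ (⟪B x, x⟫).re) (hn : ‖B‖ ≠ 0) :
    ∃ η : H, ‖η‖ = 1 ∧ B η = ((‖B‖ : ℝ) : ℂ) • η := by
  set M := ‖B‖ with hMdef
  have hMpos : 0 < M := lt_of_le_of_ne (norm_nonneg B) (Ne.symm hn)
  -- maximizing sequence
  have hseq : ∀ j : ℕ, ∃ x : H, ‖x‖ = 1 ∧ M - 1/(j+1) < (⟪B x, x⟫).re := by
    intro j
    exact exists_max_seq B hsa hpos hn (1/(j+1)) (by positivity)
  choose x hx1 hx2 using hseq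
  have htend : Filter.Tendsto (fun j => (⟪B (x j), x j⟫).re) Filter.atTop (nhds M) := by
    have hub : ∀ j, (⟪B (x j), x j⟫).re ≤ M := by
      intro j
      have := re_inner_le_norm B (x j)
      rw [hx1 j] at this; simpa using this
    have hlb : ∀ j, M - 1/(j+1) ≤ (⟪B (x j), x j⟫).re := fun j => (hx2 j).le
    have h1 : Filter.Tendsto (fun j : ℕ => M - 1/(j+1 : ℝ)) Filter.atTop (nhds (M - 0)) := by
      exact Filter.Tendsto.const_sub M tendsto_one_div_add_atTop_nhds_zero_nat
    rw [sub_zero] at h1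
    exact tendsto_of_tendsto_of_tendsto_of_le_of_le h1 tendsto_const_nhds hlb hub
  -- ‖B x j - M x j‖ → 0
  have hdiff : Filter.Tendsto (fun j => B (x j) - ((M:ℝ):ℂ) • x j) Filter.atTop (nhds 0) := by
    rw [tendsto_zero_iff_norm_tendsto_zero]
    have hbound : ∀ j, ‖B (x j) - ((M:ℝ):ℂ) • x j‖ ^ 2 ≤ 2 * M ^ 2 - 2 * M * (⟪B (x j), x j⟫).re := by
      intro j
      have hexp := @norm_sub_sq ℂ _ _ _ _ (B (x j)) (((M:ℝ):ℂ) • x j)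
      have h1 : RCLike.re ⟪B (x j), ((M:ℝ):ℂ) • x j⟫ = M * (⟪B (x j), x j⟫).re := by
        rw [inner_smul_right]
        simp [Complex.mul_re]
      have h2 : ‖((M:ℝ):ℂ) • x j‖ = M := by
        rw [norm_smul, hx1 j]; simp [abs_of_pos hMpos]
      have h3 : ‖B (x j)‖ ≤ M := by
        have := B.le_opNorm (x j); rw [hx1 j] at this; simpa using this
      rw [hexp, h1, h2]
      nlinarith [norm_nonneg (B (x j))]
    have hsq : Filter.Tendsto (fun j => 2 * M ^ 2 - 2 * M * (⟪B (x j), x j⟫).re)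
        Filter.atTop (nhds 0) := by
      have := (htend.const_mul (2 * M)).const_sub (2 * M ^ 2)
      have h0 : 2 * M ^ 2 - 2 * M * M = 0 := by ring
      rw [h0] at this; exact this
    have hsqrt : Filter.Tendsto (fun j => Real.sqrt (2 * M ^ 2 - 2 * M * (⟪B (x j), x j⟫).re))
        Filter.atTop (nhds 0) := by
      have := hsq.sqrt
      rwa [Real.sqrt_zero] at this
    refine squeeze_zero (fun j => norm_nonneg _) (fun j => ?_) hsqrt
    have := hbound j
    nlinarith [norm_nonneg (B (x j) - ((M:ℝ):ℂ) • x j),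
      Real.sq_sqrt (show (0:ℝ) ≤ 2 * M ^ 2 - 2 * M * (⟪B (x j), x j⟫).re by nlinarith [norm_nonneg (B (x j) - ((M:ℝ):ℂ) • x j), hbound j]),
      Real.sqrt_nonneg (2 * M ^ 2 - 2 * M * (⟪B (x j), x j⟫).re)]
  -- extract convergent subsequence of B (x j)
  obtain ⟨K, hK, hKmem⟩ := hB
  obtain ⟨ε, hε, hball⟩ := Metric.mem_nhds_iff.mp hKmem
  have hmemK : ∀ j, B (((ε/2 : ℝ) : ℂ) • x j) ∈ K := by
    intro j
    apply hball
    rw [Metric.mem_ball, dist_zero_right, norm_smul, hx1 j]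
    simp
    linarith [abs_of_pos hε]
  obtain ⟨z₀, hz₀K, φ, hφ, hφtend⟩ := hK.tendsto_subseq hmemK
  have hε2 : ((ε/2 : ℝ) : ℂ) ≠ 0 := by
    simp; intro h; linarith
  have hBconv : Filter.Tendsto (fun j => B (x (φ j))) Filter.atTop (nhds (((ε/2:ℝ):ℂ)⁻¹ • z₀)) := by
    have : ∀ j, B (x (φ j)) = ((ε/2:ℝ):ℂ)⁻¹ • B (((ε/2 : ℝ) : ℂ) • x (φ j)) := by
      intro j; rw [map_smul, smul_smul, inv_mul_cancel₀ hε2, one_smul]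
    simp_rw [this]
    exact hφtend.const_smul _
  set z := ((ε/2:ℝ):ℂ)⁻¹ • z₀ with hz
  -- x (φ j) converges to M⁻¹ z
  have hxconv : Filter.Tendsto (fun j => x (φ j)) Filter.atTop (nhds (((M:ℝ):ℂ)⁻¹ • z)) := by
    have h1 : Filter.Tendsto (fun j => B (x (φ j)) - (B (x (φ j)) - ((M:ℝ):ℂ) • x (φ j)))
        Filter.atTop (nhds (z - 0)) := hBconv.sub (hdiff.comp hφ.tendsto_atTop)
    rw [sub_zero] at h1
    have h2 : ∀ j, ((M:ℝ):ℂ)⁻¹ • (B (x (φ j)) - (B (x (φ j)) - ((M:ℝ):ℂ) • x (φ j))) = x (φ j) := by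
      intro j
      rw [sub_sub_cancel, smul_smul, inv_mul_cancel₀ (by simp; exact ne_of_gt hMpos), one_smul]
    have h3 := h1.const_smul (((M:ℝ):ℂ)⁻¹)
    simp_rw [h2] at h3
    exact h3
  set η : H := ((M:ℝ):ℂ)⁻¹ • z with hη
  refine ⟨η, ?_, ?_⟩
  · have := (continuous_norm.tendsto _).comp hxconv
    have h1 : Filter.Tendsto (fun j => ‖x (φ j)‖) Filter.atTop (nhds ‖η‖) := this
    have h2 : Filter.Tendsto (fun j => ‖x (φ j)‖) Filter.atTop (nhds 1) := by
      simp_rw [fun j => hx1 (φ j)]; exact tendsto_const_nhds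
    exact tendsto_nhds_unique h1 h2
  · have h1 : Filter.Tendsto (fun j => B (x (φ j))) Filter.atTop (nhds (B η)) :=
      (B.continuous.tendsto _).comp hxconv
    have h2 : B η = z := tendsto_nhds_unique h1 hBconv
    rw [h2, hη, smul_smul, mul_inv_cancel₀ (by simp; exact ne_of_gt hMpos), one_smul]

def EPred (A : H →L[ℂ] H) (v : ℕ → H) (n : ℕ) (η : H) : Prop :=
  ‖η‖ = 1 ∧ (∀ i < n, ⟪v i, η⟫ = 0) ∧
    A η = ((‖resOp A v n‖ : ℝ) : ℂ) • η ∧ ‖resOp A v n‖ ≠ 0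

lemma EPred_congr (A : H →L[ℂ] H) {v w : ℕ → H} {n : ℕ} (h : ∀ i < n, v i = w i) (η : H) :
    EPred A v n η ↔ EPred A w n η := by
  unfold EPred
  rw [resOp_congr A n h]
  constructor
  · rintro ⟨h1, h2, h3⟩
    exact ⟨h1, fun i hi => by rw [← h i hi]; exact h2 i hi, h3⟩
  · rintro ⟨h1, h2, h3⟩
    exact ⟨h1, fun i hi => by rw [h i hi]; exact h2 i hi, h3⟩

open Classical in
noncomputable def etaSV (A : H →L[ℂ] H) (n : ℕ) : H :=
  if h : ∃ η : H, EPred A (fun i => if _ : i < n then etaSV A i else 0) n η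
  then h.choose else 0
termination_by n
decreasing_by all_goals assumption

noncomputable def lamSV (A : H →L[ℂ] H) (n : ℕ) : ℝ := ‖resOp A (etaSV A) n‖

lemma lamSV_nonneg (A : H →L[ℂ] H) (n : ℕ) : 0 ≤ lamSV A n := norm_nonneg _

lemma etaSV_prev_eq (A : H →L[ℂ] H) (n : ℕ) :
    ∀ i < n, (fun i => if _ : i < n then etaSV A i else 0) i = etaSV A i :=
  fun i hi => dif_pos hi

lemma etaSV_spec (A : H →L[ℂ] H) (n : ℕ)
    (h : ∃ η : H, EPred A (etaSV A) n η) : EPred A (etaSV A) n (etaSV A n) := by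
  rw [etaSV]
  have h' : ∃ η : H, EPred A (fun i => if _ : i < n then etaSV A i else 0) n η := by
    obtain ⟨η, hη⟩ := h
    exact ⟨η, (EPred_congr A (etaSV_prev_eq A n) η).mpr hη⟩
  rw [dif_pos h']
  exact (EPred_congr A (etaSV_prev_eq A n) _).mp h'.choose_spec

lemma etaSV_eq_zero (A : H →L[ℂ] H) (n : ℕ)
    (h : ¬ ∃ η : H, EPred A (etaSV A) n η) : etaSV A n = 0 := by
  rw [etaSV]
  rw [dif_neg]
  intro h'
  exact h (h'.imp fun η hη => (EPred_congr A (etaSV_prev_eq A n) η).mp hη)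

lemma projF_symm (v : ℕ → H) (n : ℕ) (x y : H) :
    ⟪projF v n x, y⟫ = ⟪x, projF v n y⟫ := by
  rw [projF_apply, projF_apply, sum_inner, inner_sum]
  refine Finset.sum_congr rfl fun i _ => ?_
  rw [inner_smul_left, inner_smul_right, ← inner_conj_symm x (v i)]
  ring

lemma Q_symm (v : ℕ → H) (n : ℕ) (x y : H) :
    ⟪(1 - projF v n) x, y⟫ = ⟪x, (1 - projF v n) y⟫ := by
  simp only [ContinuousLinearMap.sub_apply, ContinuousLinearMap.one_apply,
    inner_sub_left, inner_sub_right, projF_symm]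

lemma resOp_apply (A : H →L[ℂ] H) (v : ℕ → H) (n : ℕ) (x : H) :
    resOp A v n x = (1 - projF v n) (A ((1 - projF v n) x)) := rfl

lemma resOp_symm (A : H →L[ℂ] H) (hsa : ∀ x y : H, ⟪A x, y⟫ = ⟪x, A y⟫)
    (v : ℕ → H) (n : ℕ) (x y : H) : ⟪resOp A v n x, y⟫ = ⟪x, resOp A v n y⟫ := by
  rw [resOp_apply, resOp_apply, Q_symm, hsa, ← Q_symm]

lemma resOp_pos (A : H →L[ℂ] H) (hpos : ∀ x : H, 0 ≤ (⟪A x, x⟫).re)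
    (v : ℕ → H) (n : ℕ) (x : H) : 0 ≤ (⟪resOp A v n x, x⟫).re := by
  rw [resOp_apply, Q_symm]
  exact hpos _

lemma resOp_compact (A : H →L[ℂ] H) (hAc : IsCompactOperator (A : H → H))
    (v : ℕ → H) (n : ℕ) : IsCompactOperator (resOp A v n : H → H) := by
  have h1 : IsCompactOperator (A ∘L (1 - projF v n) : H → H) :=
    hAc.comp_clm (1 - projF v n)
  have h2 : IsCompactOperator ((1 - projF v n) ∘L (A ∘L (1 - projF v n)) : H → H) := by
    have := h1.continuous_comp (1 - projF v n).continuous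
    exact this
  exact h2

/-- The main inductive structure theorem. -/
theorem etaSV_main (A : H →L[ℂ] H) (hsa : ∀ x y : H, ⟪A x, y⟫ = ⟪x, A y⟫)
    (hpos : ∀ x : H, 0 ≤ (⟪A x, x⟫).re) (hAc : IsCompactOperator (A : H → H)) :
    ∀ n : ℕ, (lamSV A n ≠ 0 → ‖etaSV A n‖ = 1 ∧
        A (etaSV A n) = ((lamSV A n : ℝ) : ℂ) • etaSV A n) ∧
      (lamSV A n = 0 → etaSV A n = 0) ∧
      (∀ i < n, ⟪etaSV A i, etaSV A n⟫ = 0) := by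
  intro n
  induction n using Nat.strong_induction_on with
  | _ n IH =>
  have hGood : Good (etaSV A) n := by
    constructor
    · intro i hi
      rcases eq_or_ne (lamSV A i) 0 with h0 | h0
      · exact Or.inr ((IH i hi).2.1 h0)
      · exact Or.inl ((IH i hi).1 h0).1
    · intro i hi j hj hij
      rcases lt_or_gt_of_ne hij with h | h
      · exact (IH j hj).2.2 i h
      · rw [← inner_conj_symm, (IH i hi).2.2 j h, map_zero]
  rcases eq_or_ne (lamSV A n) 0 with h0 | h0
  · have hz : etaSV A n = 0 := by
      apply etaSV_eq_zero
      rintro ⟨η, -, -, -, hne⟩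
      exact hne h0
    exact ⟨fun h => absurd h0 h, fun _ => hz, fun i _ => by simp [hz]⟩
  · -- existence of eigenvector for the residual operator
    set B := resOp A (etaSV A) n with hB
    have hBnorm : ‖B‖ = lamSV A n := rfl
    obtain ⟨ζ, hζ1, hζ2⟩ := exists_eigenvector B (resOp_compact A hAc _ n)
      (resOp_symm A hsa _ n) (resOp_pos A hpos _ n) (by rw [hBnorm]; exact h0)
    rw [hBnorm] at hζ2
    have hlinv : ((lamSV A n : ℝ) : ℂ) ≠ 0 := by
      simpa using h0
    have hζorth : ∀ i < n, ⟪etaSV A i, ζ⟫ = 0 := by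
      intro i hi
      have : ζ = ((lamSV A n : ℝ) : ℂ)⁻¹ • B ζ := by
        rw [hζ2, smul_smul, inv_mul_cancel₀ hlinv, one_smul]
      rw [this, inner_smul_right, resOp_apply, inner_one_sub_projF hGood hi]
      ring
    have hQζ : (1 - projF (etaSV A) n) ζ = ζ := by
      have hp : projF (etaSV A) n ζ = 0 := by
        rw [projF_apply]
        refine Finset.sum_eq_zero fun i hiℜ => ?_
        rw [hζorth i (Finset.mem_range.mp hiℜ), zero_smul]
      simp [ContinuousLinearMap.sub_apply, hp]
    have hAζ : A ζ = ((lamSV A n : ℝ) : ℂ) • ζ := by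
      have hpAζ : projF (etaSV A) n (A ζ) = 0 := by
        rw [projF_apply]
        refine Finset.sum_eq_zero fun i hiℜ => ?_
        have hi := Finset.mem_range.mp hiℜ
        have : ⟪etaSV A i, A ζ⟫ = 0 := by
          rw [← hsa]
          rcases eq_or_ne (lamSV A i) 0 with hli | hli
          · rw [(IH i hi).2.1 hli]; simp
          · rw [((IH i hi).1 hli).2, inner_smul_left, hζorth i hi]; ring
        rw [this, zero_smul]
      have : B ζ = A ζ := by
        rw [resOp_apply, hQζ]
        simp [ContinuousLinearMap.sub_apply, hpAζ]
      rw [← this, hζ2]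
    have hex : ∃ η : H, EPred A (etaSV A) n η := ⟨ζ, hζ1, hζorth, hAζ, h0⟩
    obtain ⟨he1, he2, he3⟩ := etaSV_spec A n hex
    exact ⟨fun _ => ⟨he1, he3.1⟩, fun h => absurd h h0, he2⟩

/-- Expansion: `‖x - ∑ cᵢ eᵢ‖² = ‖x‖² - ∑ ‖cᵢ‖²` for an orthonormal-or-zero family. -/
lemma norm_sub_proj_sq (e : ℕ → H) (he1 : ∀ i, ‖e i‖ = 1 ∨ e i = 0)
    (he2 : ∀ i j, i ≠ j → ⟪e i, e j⟫ = 0) (s : Finset ℕ) (x : H) :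
    ‖x - ∑ m ∈ s, ⟪e m, x⟫ • e m‖ ^ 2 = ‖x‖ ^ 2 - ∑ m ∈ s, ‖⟪e m, x⟫‖ ^ 2 := by
  set y := ∑ m ∈ s, ⟪e m, x⟫ • e m with hy
  have hxy : ⟪x, y⟫ = (∑ m ∈ s, ‖⟪e m, x⟫‖ ^ 2 : ℝ) := by
    rw [hy, inner_sum]
    push_cast
    refine Finset.sum_congr rfl fun m _ => ?_
    rw [inner_smul_right, ← inner_conj_symm x (e m), Complex.mul_conj']
  have hyy : ⟪y, y⟫ = (∑ m ∈ s, ‖⟪e m, x⟫‖ ^ 2 : ℝ) := by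
    rw [hy, inner_sum]
    push_cast
    refine Finset.sum_congr rfl fun m hm => ?_
    rw [inner_smul_right, sum_inner, Finset.sum_eq_single m]
    · rw [inner_smul_left, inner_self_eq_norm_sq_to_K]
      rcases he1 m with h1 | h0
      · rw [h1, ← Complex.mul_conj']
        push_cast
        ring
      · simp [h0, inner_smul_left]
    · intro j hj hjm
      rw [inner_smul_left, he2 j m hjm]
      ring
    · exact fun h => (h hm).elim
  have h1 : RCLike.re ⟪x, y⟫ = (∑ m ∈ s, ‖⟪e m, x⟫‖ ^ 2 : ℝ) := by
    rw [hxy]; norm_cast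
  have h2 : ‖y‖ ^ 2 = (∑ m ∈ s, ‖⟪e m, x⟫‖ ^ 2 : ℝ) := by
    rw [← inner_self_eq_norm_sq (𝕜 := ℂ), hyy]; norm_cast
  rw [@norm_sub_sq ℂ, h1, h2]
  ring

lemma bessel_aux (e : ℕ → H) (he1 : ∀ i, ‖e i‖ = 1 ∨ e i = 0)
    (he2 : ∀ i j, i ≠ j → ⟪e i, e j⟫ = 0) (s : Finset ℕ) (x : H) :
    ∑ m ∈ s, ‖⟪e m, x⟫‖ ^ 2 ≤ ‖x‖ ^ 2 := by
  have := norm_sub_proj_sq e he1 he2 s x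
  nlinarith [sq_nonneg ‖x - ∑ m ∈ s, ⟪e m, x⟫ • e m‖]

/-- Bernoulli-type inequality: `u ^ q ≤ 1 - q + q * u` for `0 < q ≤ 1`, `0 ≤ u`. -/
lemma rpow_le_linear {u q : ℝ} (hu : 0 ≤ u) (hq0 : 0 < q) (hq1 : q ≤ 1) :
    u ^ q ≤ 1 - q + q * u := by
  have hs : (-1 : ℝ) ≤ u ^ q - 1 := by
    have : (0:ℝ) ≤ u ^ q := Real.rpow_nonneg hu q
    linarith
  have hp : (1:ℝ) ≤ 1 / q := by
    rw [le_div_iff₀ hq0]; linarith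
  have key := one_add_mul_self_le_rpow_one_add hs hp
  have heq : (1 + (u ^ q - 1)) ^ (1/q) = u := by
    rw [show 1 + (u ^ q - 1) = u ^ q by ring,
      ← Real.rpow_mul hu, mul_one_div, div_self (ne_of_gt hq0), Real.rpow_one]
  rw [heq] at key
  have := mul_le_mul_of_nonneg_left key (le_of_lt hq0)
  have hq' : q * (1 / q * (u ^ q - 1)) = u ^ q - 1 := by
    field_simp
  nlinarith

/-- Jensen-type inequality for substochastic weights and concave `t ↦ t^q`. -/
lemma concave_sum_le {s : Finset ℕ} {w t : ℕ → ℝ} (hw : ∀ i ∈ s, 0 ≤ w i)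
    (hw1 : ∑ i ∈ s, w i ≤ 1) (ht : ∀ i ∈ s, 0 ≤ t i) {q : ℝ} (hq0 : 0 < q) (hq1 : q ≤ 1) :
    ∑ i ∈ s, w i * t i ^ q ≤ (∑ i ∈ s, w i * t i) ^ q := by
  set S := ∑ i ∈ s, w i * t i with hS
  have hS0 : 0 ≤ S := Finset.sum_nonneg fun i hi => mul_nonneg (hw i hi) (ht i hi)
  rcases eq_or_lt_of_le hS0 with h0 | hpos
  · -- S = 0: every term is zero
    have hz : ∀ i ∈ s, w i * t i = 0 := by
      intro i hi
      have := Finset.sum_eq_zero_iff_of_nonneg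
        (fun i hi => mul_nonneg (hw i hi) (ht i hi)) |>.mp h0.symm
      exact this i hi
    have : ∀ i ∈ s, w i * t i ^ q = 0 := by
      intro i hi
      rcases mul_eq_zero.mp (hz i hi) with h | h
      · rw [h, zero_mul]
      · rw [h, Real.zero_rpow (ne_of_gt hq0), mul_zero]
    rw [Finset.sum_eq_zero this, ← h0, Real.zero_rpow (ne_of_gt hq0)]
  · have key : ∀ i ∈ s, w i * t i ^ q ≤ S ^ q * (w i * (1 - q) + q / S * (w i * t i)) := by
      intro i hi
      have htiS : t i ^ q = S ^ q * (t i / S) ^ q := by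
        rw [← Real.mul_rpow hS0 (div_nonneg (ht i hi) hS0)]
        rw [mul_div_cancel₀ _ (ne_of_gt hpos)]
      rw [htiS]
      have hber := rpow_le_linear (div_nonneg (ht i hi) hS0) hq0 hq1
      have hSq : 0 ≤ S ^ q := Real.rpow_nonneg hS0 q
      have h1 : w i * (S ^ q * (t i / S) ^ q) = S ^ q * (w i * (t i / S) ^ q) := by ring
      rw [h1]
      have h2 : w i * (t i / S) ^ q ≤ w i * (1 - q + q * (t i / S)) :=
        mul_le_mul_of_nonneg_left hber (hw i hi)
      have h3 : w i * (1 - q + q * (t i / S)) = w i * (1 - q) + q / S * (w i * t i) := by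
        field_simp
      rw [h3] at h2
      exact mul_le_mul_of_nonneg_left h2 hSq
    calc ∑ i ∈ s, w i * t i ^ q
        ≤ ∑ i ∈ s, S ^ q * (w i * (1 - q) + q / S * (w i * t i)) :=
          Finset.sum_le_sum key
      _ = S ^ q * ((1 - q) * (∑ i ∈ s, w i) + q / S * S) := by
          rw [← Finset.mul_sum, Finset.sum_add_distrib, ← Finset.mul_sum]
          rw [← hS]
          congr 2
          · rw [Finset.mul_sum]
            exact Finset.sum_congr rfl fun i hi => by ring
      _ ≤ S ^ q * ((1 - q) * 1 + q / S * S) := by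
          have hSq : 0 ≤ S ^ q := Real.rpow_nonneg hS0 q
          have h1q : 0 ≤ 1 - q := by linarith
          have : (1 - q) * (∑ i ∈ s, w i) ≤ (1 - q) * 1 :=
            mul_le_mul_of_nonneg_left hw1 h1q
          nlinarith [div_nonneg (le_of_lt hq0) hS0, mul_le_mul_of_nonneg_left this hSq]
      _ = S ^ q := by
          rw [div_mul_cancel₀ _ (ne_of_gt hpos)]
          ring

section Corollaries

variable {A : H →L[ℂ] H}

lemma eta_norm_or_zero (hsa : ∀ x y : H, ⟪A x, y⟫ = ⟪x, A y⟫)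
    (hpos : ∀ x : H, 0 ≤ (⟪A x, x⟫).re) (hAc : IsCompactOperator (A : H → H)) (i : ℕ) : ‖etaSV A i‖ = 1 ∨ etaSV A i = 0 := by
  rcases eq_or_ne (lamSV A i) 0 with h0 | h0
  · exact Or.inr ((etaSV_main A hsa hpos hAc i).2.1 h0)
  · exact Or.inl ((etaSV_main A hsa hpos hAc i).1 h0).1

lemma eta_orthogonal (hsa : ∀ x y : H, ⟪A x, y⟫ = ⟪x, A y⟫)
    (hpos : ∀ x : H, 0 ≤ (⟪A x, x⟫).re) (hAc : IsCompactOperator (A : H → H))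
    {i j : ℕ} (hij : i ≠ j) : ⟪etaSV A i, etaSV A j⟫ = 0 := by
  rcases lt_or_gt_of_ne hij with h | h
  · exact (etaSV_main A hsa hpos hAc j).2.2 i h
  · rw [← inner_conj_symm, (etaSV_main A hsa hpos hAc i).2.2 j h, map_zero]

lemma eta_eig (hsa : ∀ x y : H, ⟪A x, y⟫ = ⟪x, A y⟫)
    (hpos : ∀ x : H, 0 ≤ (⟪A x, x⟫).re) (hAc : IsCompactOperator (A : H → H)) (i : ℕ) : A (etaSV A i) = ((lamSV A i : ℝ) : ℂ) • etaSV A i := by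
  rcases eq_or_ne (lamSV A i) 0 with h0 | h0
  · rw [(etaSV_main A hsa hpos hAc i).2.1 h0]
    simp
  · exact ((etaSV_main A hsa hpos hAc i).1 h0).2

lemma lam_mul_inner_self (hsa : ∀ x y : H, ⟪A x, y⟫ = ⟪x, A y⟫)
    (hpos : ∀ x : H, 0 ≤ (⟪A x, x⟫).re) (hAc : IsCompactOperator (A : H → H)) (i : ℕ) :
    ((lamSV A i : ℝ) : ℂ) * ⟪etaSV A i, etaSV A i⟫ = ((lamSV A i : ℝ) : ℂ) := by
  rcases eq_or_ne (lamSV A i) 0 with h0 | h0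
  · rw [h0]; simp
  · rw [inner_self_eq_norm_sq_to_K, ((etaSV_main A hsa hpos hAc i).1 h0).1]
    simp

end Corollaries

section OpA

variable (T : H →L[ℂ] H)

lemma opA_symm : ∀ x y : H, ⟪(adjoint T ∘L T) x, y⟫ = ⟪x, (adjoint T ∘L T) y⟫ := by
  intro x y
  simp only [ContinuousLinearMap.comp_apply]
  rw [ContinuousLinearMap.adjoint_inner_left, ← ContinuousLinearMap.adjoint_inner_right]

lemma opA_re (x : H) : (⟪(adjoint T ∘L T) x, x⟫).re = ‖T x‖ ^ 2 := by
  simp only [ContinuousLinearMap.comp_apply]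
  rw [ContinuousLinearMap.adjoint_inner_left]
  exact inner_self_eq_norm_sq (𝕜 := ℂ) _

lemma opA_pos : ∀ x : H, 0 ≤ (⟪(adjoint T ∘L T) x, x⟫).re := by
  intro x
  rw [opA_re]
  positivity

lemma opA_compact (hT : IsCompactOperator (T : H → H)) :
    IsCompactOperator ((adjoint T ∘L T) : H → H) :=
  hT.continuous_comp (adjoint T).continuous

/-- Key estimate (abstract form). -/
lemma sum_lam_inner_le' (A : H →L[ℂ] H) (hsa : ∀ x y : H, ⟪A x, y⟫ = ⟪x, A y⟫)
    (hpos : ∀ x : H, 0 ≤ (⟪A x, x⟫).re) (hAc : IsCompactOperator (A : H → H))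
    (s : Finset ℕ) (x : H) :
    ∑ m ∈ s, lamSV A m * ‖⟪etaSV A m, x⟫‖ ^ 2 ≤ (⟪A x, x⟫).re := by
  have hinner_r : ∀ m ∈ s, ((lamSV A m : ℝ) : ℂ) *
      ⟪etaSV A m, x - ∑ k ∈ s, ⟪etaSV A k, x⟫ • etaSV A k⟫ = 0 := by
    intro m hm
    have h1 : ⟪etaSV A m, ∑ k ∈ s, ⟪etaSV A k, x⟫ • etaSV A k⟫ =
        ⟪etaSV A m, x⟫ * ⟪etaSV A m, etaSV A m⟫ := by
      rw [inner_sum, Finset.sum_eq_single m]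
      · rw [inner_smul_right]
      · intro j hj hjm
        rw [inner_smul_right, eta_orthogonal hsa hpos hAc (Ne.symm hjm)]
        ring
      · exact fun h => (h hm).elim
    rw [inner_sub_right, h1]
    have h2 := lam_mul_inner_self hsa hpos hAc m
    calc ((lamSV A m : ℝ) : ℂ) * (⟪etaSV A m, x⟫ - ⟪etaSV A m, x⟫ * ⟪etaSV A m, etaSV A m⟫)
        = ⟪etaSV A m, x⟫ * (((lamSV A m : ℝ) : ℂ)
            - ((lamSV A m : ℝ) : ℂ) * ⟪etaSV A m, etaSV A m⟫) := by ring
      _ = 0 := by rw [h2]; ring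
  set y := ∑ k ∈ s, ⟪etaSV A k, x⟫ • etaSV A k with hy
  set r := x - y with hr
  have hAyr : ⟪A y, r⟫ = 0 := by
    rw [hy, map_sum, sum_inner]
    refine Finset.sum_eq_zero fun m hm => ?_
    rw [map_smul, inner_smul_left, eta_eig hsa hpos hAc m, inner_smul_left,
      Complex.conj_ofReal]
    rw [hinner_r m hm, mul_zero]
  have hAry : ⟪A r, y⟫ = 0 := by
    rw [hsa, ← inner_conj_symm, hAyr, map_zero]
  have hAyy : ⟪A y, y⟫ = ((∑ m ∈ s, lamSV A m * ‖⟪etaSV A m, x⟫‖ ^ 2 : ℝ) : ℂ) := by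
    conv_lhs => rw [hy, inner_sum]
    push_cast
    refine Finset.sum_congr rfl fun m hm => ?_
    rw [inner_smul_right]
    have h3 : ⟪A y, etaSV A m⟫ = (starRingEnd ℂ) (⟪etaSV A m, x⟫) * ((lamSV A m : ℝ) : ℂ) := by
      rw [hy, map_sum, sum_inner, Finset.sum_eq_single m]
      · rw [map_smul, inner_smul_left, eta_eig hsa hpos hAc m, inner_smul_left,
          Complex.conj_ofReal, ← mul_assoc, mul_comm _ (((lamSV A m :ℝ)):ℂ), mul_assoc,
          ← mul_assoc]
        rw [mul_comm (((lamSV A m :ℝ)):ℂ)]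
        rw [mul_assoc, lam_mul_inner_self hsa hpos hAc m]
      · intro j hj hjm
        rw [map_smul, inner_smul_left, eta_eig hsa hpos hAc j, inner_smul_left,
          eta_orthogonal hsa hpos hAc hjm]
        ring
      · exact fun h => (h hm).elim
    rw [h3, ← mul_assoc, Complex.mul_conj']
    push_cast
    ring
  have hx : x = y + r := by rw [hr]; abel
  have hexp : ⟪A x, x⟫ = ⟪A y, y⟫ + ⟪A r, r⟫ := by
    conv_lhs => rw [hx]
    rw [map_add, inner_add_left, inner_add_right, inner_add_right, hAyr, hAry]
    ring
  have hre : (⟪A x, x⟫).re = (∑ m ∈ s, lamSV A m * ‖⟪etaSV A m, x⟫‖ ^ 2) + (⟪A r, r⟫).re := by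
    rw [hexp, Complex.add_re, hAyy, Complex.ofReal_re]
  rw [hre]
  have := hpos r
  linarith

/-- Key estimate: for any finite set, `∑ λₘ |⟨ηₘ, x⟩|² ≤ ‖T x‖²`. -/
lemma sum_lam_inner_le (T : H →L[ℂ] H) (hT : IsCompactOperator (T : H → H)) (s : Finset ℕ)
    (x : H) :
    ∑ m ∈ s, lamSV (adjoint T ∘L T) m * ‖⟪etaSV (adjoint T ∘L T) m, x⟫‖ ^ 2 ≤ ‖T x‖ ^ 2 := by
  have := sum_lam_inner_le' (adjoint T ∘L T) (opA_symm T) (opA_pos T) (opA_compact T hT) s x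
  rwa [opA_re] at this

lemma singularValue_nonneg (T : H →L[ℂ] H) (k : ℕ) : 0 ≤ singularValue T k := by
  apply Real.sInf_nonneg
  rintro r ⟨F, -, rfl⟩
  exact norm_nonneg _

open Cardinal in
lemma singularValue_le_sqrt_lam (T : H →L[ℂ] H) (hT : IsCompactOperator (T : H → H)) (k : ℕ) :
    singularValue T k ≤ Real.sqrt (lamSV (adjoint T ∘L T) k) := by
  set A := adjoint T ∘L T with hA
  set F : H →L[ℂ] H := T ∘L projF (etaSV A) k with hF
  have hrank : Module.rank ℂ (LinearMap.range (F : H →ₗ[ℂ] H)) ≤ (k : Cardinal) := by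
    have hsub : LinearMap.range (F : H →ₗ[ℂ] H) ≤
        Submodule.span ℂ (Set.range (fun i : Fin k => T (etaSV A i))) := by
      rintro y ⟨x, rfl⟩
      show F x ∈ _
      rw [hF, ContinuousLinearMap.comp_apply, projF_apply, map_sum]
      refine Submodule.sum_mem _ fun i hi => ?_
      rw [map_smul]
      exact Submodule.smul_mem _ _
        (Submodule.subset_span ⟨⟨i, Finset.mem_range.mp hi⟩, rfl⟩)
    calc Module.rank ℂ (LinearMap.range (F : H →ₗ[ℂ] H))
        ≤ Module.rank ℂ (Submodule.span ℂ (Set.range (fun i : Fin k => T (etaSV A i)))) :=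
          Submodule.rank_mono hsub
      _ ≤ #(Set.range (fun i : Fin k => T (etaSV A i))) := rank_span_le _
      _ ≤ (k : Cardinal) := by
          have h := Cardinal.mk_range_le_lift (f := fun i : Fin k => T (etaSV A i))
          rw [Cardinal.mk_fin, Cardinal.lift_natCast, Cardinal.lift_uzero] at h
          exact h
  have hlam0 : 0 ≤ lamSV A k := lamSV_nonneg A k
  have hnorm : ‖T - F‖ ≤ Real.sqrt (lamSV A k) := by
    refine ContinuousLinearMap.opNorm_le_bound _ (Real.sqrt_nonneg _) fun x => ?_
    have h1 : (T - F) x = T ((1 - projF (etaSV A) k) x) := by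
      simp [hF, ContinuousLinearMap.sub_apply, ContinuousLinearMap.comp_apply, map_sub]
    rw [h1]
    have h2 : ‖T ((1 - projF (etaSV A) k) x)‖ ^ 2 ≤ lamSV A k * ‖x‖ ^ 2 := by
      have h3 : ‖T ((1 - projF (etaSV A) k) x)‖ ^ 2 = (⟪resOp A (etaSV A) k x, x⟫).re := by
        rw [resOp_apply, Q_symm, ← opA_re T]
      rw [h3]
      calc (⟪resOp A (etaSV A) k x, x⟫).re ≤ ‖⟪resOp A (etaSV A) k x, x⟫‖ := Complex.re_le_norm _
        _ ≤ ‖resOp A (etaSV A) k x‖ * ‖x‖ := norm_inner_le_norm _ _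
        _ ≤ (‖resOp A (etaSV A) k‖ * ‖x‖) * ‖x‖ := by
            have := (resOp A (etaSV A) k).le_opNorm x
            nlinarith [norm_nonneg x]
        _ = lamSV A k * ‖x‖ ^ 2 := by
            rw [show lamSV A k = ‖resOp A (etaSV A) k‖ from rfl]; ring
    have h4 : 0 ≤ ‖T ((1 - projF (etaSV A) k) x)‖ := norm_nonneg _
    have h5 : Real.sqrt (lamSV A k) * ‖x‖ = Real.sqrt (lamSV A k * ‖x‖ ^ 2) := by
      rw [Real.sqrt_mul hlam0, Real.sqrt_sq (norm_nonneg x)]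
    rw [h5]
    rw [show ‖T ((1 - projF (etaSV A) k) x)‖ =
      Real.sqrt (‖T ((1 - projF (etaSV A) k) x)‖ ^ 2) from (Real.sqrt_sq h4).symm]
    exact Real.sqrt_le_sqrt h2
  have hmem : ‖T - F‖ ∈ ((fun F : H →L[ℂ] H => ‖T - F‖) ''
      {F | Module.rank ℂ (LinearMap.range (F : H →ₗ[ℂ] H)) ≤ (k : Cardinal)}) :=
    ⟨F, hrank, rfl⟩
  have hbdd : BddBelow ((fun F : H →L[ℂ] H => ‖T - F‖) ''
      {F | Module.rank ℂ (LinearMap.range (F : H →ₗ[ℂ] H)) ≤ (k : Cardinal)}) := by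
    refine ⟨0, ?_⟩
    rintro r ⟨G, -, rfl⟩
    exact norm_nonneg _
  exact le_trans (csInf_le hbdd hmem) hnorm

end OpA

/-- Best approximation: distance to the partial Fourier sum is minimal. -/
lemma parseval_lower (ξ : ℕ → H) (hξ : Orthonormal ℂ ξ) {η : H}
    (hmem : η ∈ (Submodule.span ℂ (Set.range ξ)).topologicalClosure) (hnorm : ‖η‖ = 1)
    {ε : ℝ} (hε : 0 < ε) :
    ∃ s : Finset ℕ, 1 - ε ≤ ∑ n ∈ s, ‖⟪ξ n, η⟫‖ ^ 2 := by
  have hξ1 : ∀ i, ‖ξ i‖ = 1 ∨ ξ i = 0 := fun i => Or.inl (hξ.1 i)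
  have hξ2 : ∀ i j, i ≠ j → ⟪ξ i, ξ j⟫ = 0 := fun i j hij => hξ.2 hij
  have hcl : η ∈ closure ((Submodule.span ℂ (Set.range ξ) : Submodule ℂ H) : Set H) := hmem
  obtain ⟨y, hyspan, hydist⟩ := Metric.mem_closure_iff.mp hcl (Real.sqrt ε)
    (Real.sqrt_pos.mpr hε)
  obtain ⟨c, rfl⟩ := Finsupp.mem_span_range_iff_exists_finsupp.mp hyspan
  set y := c.sum fun i a => a • ξ i with hy
  set s := c.support with hs
  refine ⟨s, ?_⟩
  set Pη := ∑ n ∈ s, ⟪ξ n, η⟫ • ξ n with hP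
  have hyform : y = ∑ n ∈ s, c n • ξ n := by rw [hy]; rfl
  have horth : ∀ n ∈ s, ⟪η - Pη, ξ n⟫ = 0 := by
    intro n hn
    rw [← inner_conj_symm]
    have : ⟪ξ n, η - Pη⟫ = 0 := by
      rw [inner_sub_right, hP, inner_sum, Finset.sum_eq_single n]
      · rw [inner_smul_right, inner_self_eq_norm_sq_to_K, hξ.1 n]
        push_cast; ring
      · intro j hj hjn
        rw [inner_smul_right, hξ2 n j (Ne.symm hjn)]; ring
      · exact fun h => (h hn).elim
    rw [this, map_zero]
  have hinner0 : ⟪η - Pη, Pη - y⟫ = 0 := by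
    have : Pη - y = ∑ n ∈ s, (⟪ξ n, η⟫ - c n) • ξ n := by
      rw [hP, hyform, ← Finset.sum_sub_distrib]
      exact Finset.sum_congr rfl fun n _ => by rw [sub_smul]
    rw [this, inner_sum]
    exact Finset.sum_eq_zero fun n hn => by rw [inner_smul_right, horth n hn, mul_zero]
  have hpyth : ‖η - y‖ ^ 2 = ‖η - Pη‖ ^ 2 + ‖Pη - y‖ ^ 2 := by
    have hsplit : η - y = (η - Pη) + (Pη - y) := by abel
    rw [hsplit, @norm_add_sq ℂ, hinner0]
    simp
  have hexp := norm_sub_proj_sq ξ hξ1 hξ2 s η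
  rw [← hP] at hexp
  have hdist2 : ‖η - y‖ ^ 2 < ε := by
    rw [dist_eq_norm] at hydist
    have h0 : 0 ≤ ‖η - y‖ := norm_nonneg _
    nlinarith [Real.sq_sqrt (le_of_lt hε), Real.sqrt_nonneg ε]
  have h1 : ‖η - Pη‖ ^ 2 ≤ ‖η - y‖ ^ 2 := by nlinarith [sq_nonneg ‖Pη - y‖]
  rw [hexp, hnorm] at h1
  nlinarith

/-- `ηₘ` lies in the closure of the span of the `ξ` when its eigenvalue is nonzero. -/
lemma eta_mem_closure (T : H →L[ℂ] H) (hT : IsCompactOperator (T : H → H)) (ξ : ℕ → H)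
    (hsupp : ∀ x : H, (∀ k, ⟪ξ k, x⟫ = 0) → T x = 0) {m : ℕ}
    (hm : lamSV (adjoint T ∘L T) m ≠ 0) :
    etaSV (adjoint T ∘L T) m ∈ (Submodule.span ℂ (Set.range ξ)).topologicalClosure := by
  set V := Submodule.span ℂ (Set.range ξ) with hV
  have hadj : ∀ z : H, adjoint T z ∈ V.topologicalClosure := by
    intro z
    rw [← Submodule.orthogonal_orthogonal_eq_closure]
    intro u hu
    rw [ContinuousLinearMap.adjoint_inner_right]
    have hTu : T u = 0 := by
      apply hsupp
      intro k
      exact hu (ξ k) (Submodule.subset_span ⟨k, rfl⟩)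
    rw [hTu, inner_zero_left]
  have heig : (adjoint T ∘L T) (etaSV (adjoint T ∘L T) m) =
      ((lamSV (adjoint T ∘L T) m : ℝ) : ℂ) • etaSV (adjoint T ∘L T) m :=
    eta_eig (opA_symm T) (opA_pos T) (opA_compact T hT) m
  have hlne : ((lamSV (adjoint T ∘L T) m : ℝ) : ℂ) ≠ 0 := by simpa using hm
  have h1 : etaSV (adjoint T ∘L T) m =
      ((lamSV (adjoint T ∘L T) m : ℝ) : ℂ)⁻¹ • ((adjoint T ∘L T) (etaSV (adjoint T ∘L T) m)) := by
    rw [heig, smul_smul, inv_mul_cancel₀ hlne, one_smul]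
  rw [h1]
  exact Submodule.smul_mem _ _ (hadj (T (etaSV (adjoint T ∘L T) m)))

end SVAux

open SVAux

/-- For a compact operator `T`, an orthonormal system `ξ` spanning a subspace
containing the support of `T`, and `0 < p ≤ 2`, one has
`∑_k μ_k(T)^p ≤ ∑_k ‖T ξ_k‖^p` (Simon, Trace ideals, Remark p.17). -/
theorem singularValue_pow_sum_le (T : H →L[ℂ] H)
    (hT : IsCompactOperator (T : H →L[ℂ] H))
    (ξ : ℕ → H) (hξ : Orthonormal ℂ ξ)
    (hsupp : ∀ x : H, (∀ k, inner ℂ (ξ k) x = (0 : ℂ)) → T x = 0)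
    (p : ℝ) (hp0 : 0 < p) (hp2 : p ≤ 2) :
    ∑' k, ENNReal.ofReal (singularValue T k ^ p) ≤
      ∑' k, ENNReal.ofReal (‖T (ξ k)‖ ^ p) := by
  classical
  set A := adjoint T ∘L T with hA
  set q := p / 2 with hq
  have hq0 : 0 < q := by rw [hq]; linarith
  have hq1 : q ≤ 1 := by rw [hq]; linarith
  set R := ∑' k, ENNReal.ofReal (‖T (ξ k)‖ ^ p) with hR
  rw [ENNReal.tsum_eq_iSup_sum]
  refine iSup_le fun K => ?_
  -- termwise bound by eigenvalues
  have hterm : ∀ k, singularValue T k ^ p ≤ lamSV A k ^ q := by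
    intro k
    have h1 : singularValue T k ≤ Real.sqrt (lamSV A k) := singularValue_le_sqrt_lam T hT k
    have h2 := Real.rpow_le_rpow (singularValue_nonneg T k) h1 (le_of_lt hp0)
    refine le_trans h2 ?_
    rw [Real.sqrt_eq_rpow, ← Real.rpow_mul (lamSV_nonneg A k)]
    rw [show 1/2 * p = q by rw [hq]; ring]
  have hsum1 : ∑ k ∈ K, ENNReal.ofReal (singularValue T k ^ p) ≤
      ENNReal.ofReal (∑ k ∈ K, lamSV A k ^ q) := by
    rw [ENNReal.ofReal_sum_of_nonneg (fun k _ => Real.rpow_nonneg (lamSV_nonneg A k) q)]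
    exact Finset.sum_le_sum fun k _ => ENNReal.ofReal_le_ofReal (hterm k)
  refine le_trans hsum1 ?_
  set c := ∑ k ∈ K, lamSV A k ^ q with hc
  have hc0 : 0 ≤ c := Finset.sum_nonneg fun k _ => Real.rpow_nonneg (lamSV_nonneg A k) q
  rcases eq_or_ne R ⊤ with htop | hfin
  · rw [htop]; exact le_top
  -- the key epsilon-estimate
  have key : ∀ ε : ℝ, 0 < ε → (1 - ε) * c ≤ R.toReal := by
    intro ε hε
    set K' := K.filter (fun k => lamSV A k ≠ 0) with hK'
    have hcK' : c = ∑ k ∈ K', lamSV A k ^ q := by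
      rw [hc]
      symm
      apply Finset.sum_subset (Finset.filter_subset _ _)
      intro k hkK hknot
      have hk0 : lamSV A k = 0 := by
        by_contra hne
        exact hknot (Finset.mem_filter.mpr ⟨hkK, hne⟩)
      rw [hk0, Real.zero_rpow (ne_of_gt hq0)]
    have hsel : ∀ k : ℕ, ∃ sk : Finset ℕ,
        lamSV A k ≠ 0 → 1 - ε ≤ ∑ n ∈ sk, ‖⟪etaSV A k, ξ n⟫‖ ^ 2 := by
      intro k
      by_cases hk : lamSV A k ≠ 0
      · have hmem := eta_mem_closure T hT ξ hsupp hk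
        have hnorm1 : ‖etaSV A k‖ = 1 := by
          rcases eta_norm_or_zero (opA_symm T) (opA_pos T) (opA_compact T hT) k with h | h
          · exact h
          · exfalso
            have h1 := ((etaSV_main A (opA_symm T) (opA_pos T) (opA_compact T hT) k).1 hk).1
            rw [h, norm_zero] at h1
            norm_num at h1
        obtain ⟨sk, hsk⟩ := parseval_lower ξ hξ hmem hnorm1 hε
        refine ⟨sk, fun _ => le_trans hsk (le_of_eq (Finset.sum_congr rfl fun n _ => ?_))⟩
        rw [norm_inner_symm]
      · exact ⟨∅, fun h => absurd h hk⟩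
    choose sk hsk using hsel
    set s := K'.biUnion sk with hsdef
    have hbig : ∀ k ∈ K', 1 - ε ≤ ∑ n ∈ s, ‖⟪etaSV A k, ξ n⟫‖ ^ 2 := by
      intro k hk
      have hkne : lamSV A k ≠ 0 := (Finset.mem_filter.mp hk).2
      refine le_trans (hsk k hkne) ?_
      refine Finset.sum_le_sum_of_subset_of_nonneg
        (Finset.subset_biUnion_of_mem sk hk) fun n _ _ => by positivity
    have step1 : (1 - ε) * c ≤ ∑ k ∈ K', (∑ n ∈ s, ‖⟪etaSV A k, ξ n⟫‖ ^ 2) * lamSV A k ^ q := by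
      rw [hcK', Finset.mul_sum]
      refine Finset.sum_le_sum fun k hk => ?_
      exact mul_le_mul_of_nonneg_right (hbig k hk) (Real.rpow_nonneg (lamSV_nonneg A k) q)
    have step2 : ∑ k ∈ K', (∑ n ∈ s, ‖⟪etaSV A k, ξ n⟫‖ ^ 2) * lamSV A k ^ q =
        ∑ n ∈ s, ∑ k ∈ K', ‖⟪etaSV A k, ξ n⟫‖ ^ 2 * lamSV A k ^ q := by
      calc ∑ k ∈ K', (∑ n ∈ s, ‖⟪etaSV A k, ξ n⟫‖ ^ 2) * lamSV A k ^ q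
          = ∑ k ∈ K', ∑ n ∈ s, ‖⟪etaSV A k, ξ n⟫‖ ^ 2 * lamSV A k ^ q :=
            Finset.sum_congr rfl fun k _ => Finset.sum_mul _ _ _
        _ = ∑ n ∈ s, ∑ k ∈ K', ‖⟪etaSV A k, ξ n⟫‖ ^ 2 * lamSV A k ^ q := Finset.sum_comm
    have step3 : ∀ n ∈ s, ∑ k ∈ K', ‖⟪etaSV A k, ξ n⟫‖ ^ 2 * lamSV A k ^ q ≤
        (∑ k ∈ K', ‖⟪etaSV A k, ξ n⟫‖ ^ 2 * lamSV A k) ^ q := by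
      intro n _
      refine concave_sum_le (fun k _ => by positivity) ?_ (fun k _ => lamSV_nonneg A k) hq0 hq1
      have hb := bessel_aux (etaSV A)
        (eta_norm_or_zero (opA_symm T) (opA_pos T) (opA_compact T hT))
        (fun i j hij => eta_orthogonal (opA_symm T) (opA_pos T) (opA_compact T hT) hij)
        K' (ξ n)
      rw [hξ.1 n] at hb
      simpa using hb
    have step4 : ∀ n ∈ s, (∑ k ∈ K', ‖⟪etaSV A k, ξ n⟫‖ ^ 2 * lamSV A k) ^ q ≤
        ‖T (ξ n)‖ ^ p := by
      intro n _
      have h5 : ∑ k ∈ K', ‖⟪etaSV A k, ξ n⟫‖ ^ 2 * lamSV A k ≤ ‖T (ξ n)‖ ^ 2 := by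
        have := sum_lam_inner_le T hT K' (ξ n)
        refine le_trans (le_of_eq ?_) this
        exact Finset.sum_congr rfl fun k _ => mul_comm _ _
      have h6 := Real.rpow_le_rpow (Finset.sum_nonneg fun k _ => mul_nonneg (by positivity) (lamSV_nonneg A k)) h5 (le_of_lt hq0)
      refine le_trans h6 ?_
      rw [show (‖T (ξ n)‖ ^ 2 : ℝ) = ‖T (ξ n)‖ ^ ((2:ℕ) : ℝ) from (Real.rpow_natCast _ 2).symm]
      rw [← Real.rpow_mul (norm_nonneg _)]
      rw [show ((2:ℕ):ℝ) * q = p by rw [hq]; push_cast; ring]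
    have step5 : ∑ n ∈ s, ‖T (ξ n)‖ ^ p ≤ R.toReal := by
      have h7 : ∑ n ∈ s, ENNReal.ofReal (‖T (ξ n)‖ ^ p) ≤ R := by
        rw [hR]; exact ENNReal.sum_le_tsum s
      have h8 := ENNReal.toReal_mono hfin h7
      rw [ENNReal.toReal_sum (fun n _ => ENNReal.ofReal_ne_top)] at h8
      calc ∑ n ∈ s, ‖T (ξ n)‖ ^ p
          = ∑ n ∈ s, (ENNReal.ofReal (‖T (ξ n)‖ ^ p)).toReal := by
            refine Finset.sum_congr rfl fun n _ => ?_
            rw [ENNReal.toReal_ofReal (Real.rpow_nonneg (norm_nonneg _) p)]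
        _ ≤ R.toReal := h8
    calc (1 - ε) * c ≤ _ := step1
      _ = _ := step2
      _ ≤ ∑ n ∈ s, (∑ k ∈ K', ‖⟪etaSV A k, ξ n⟫‖ ^ 2 * lamSV A k) ^ q :=
          Finset.sum_le_sum step3
      _ ≤ ∑ n ∈ s, ‖T (ξ n)‖ ^ p := Finset.sum_le_sum step4
      _ ≤ R.toReal := step5
  -- conclude
  have hcR : c ≤ R.toReal := by
    by_contra hlt
    push_neg at hlt
    have hRt0 : 0 ≤ R.toReal := ENNReal.toReal_nonneg
    have hcpos : 0 < c := lt_of_le_of_lt hRt0 hlt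
    have hεpos : 0 < (c - R.toReal) / (2 * c) := div_pos (by linarith) (by linarith)
    have := key _ hεpos
    have hcalc : (1 - (c - R.toReal) / (2 * c)) * c = c - (c - R.toReal) / 2 := by
      field_simp
    rw [hcalc] at this
    linarith
  calc ENNReal.ofReal c ≤ ENNReal.ofReal R.toReal := ENNReal.ofReal_le_ofReal hcR
    _ = R := ENNReal.ofReal_toReal hfin
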